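/- Let H be a group and N a normal subgroup of H such that: (1) N is solvable; (2) for every nontrivial element h̄ of H/N, the centralizer C_{H/N}(h̄) is solvable; and (3) for every element a ∈ N, the centralizer C_H(a) is not solvable. Then N is a characteristic subgroup of H, i.e., α(N) = N for every automorphism α of H. -/

import Mathlib

open Subgroup

-- if a ∉ N then C(a) is solvable
lemma aux_solv {H : Type*} [Group H] (N : Subgroup H) [N.Normal]
    (h1 : IsSolvable N)
    (h2 : ∀ hb : H ⧸ N, hb ≠ 1 → IsSolvable (Subgroup.centralizer {hb}))
    {a : H} (ha : a ∉ N) : IsSolvable (Subgroup.centralizer ({a} : Set H)) := by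
  set K := Subgroup.centralizer ({a} : Set H)
  set π := QuotientGroup.mk' N
  set φ : K →* H ⧸ N := π.comp K.subtype
  have hab : (a : H ⧸ N) ≠ 1 := by
    simpa [π, QuotientGroup.eq_one_iff] using ha
  have hsolvC : IsSolvable (Subgroup.centralizer {((a : H) : H ⧸ N)}) := h2 _ hab
  have hle : φ.range ≤ Subgroup.centralizer {((a : H) : H ⧸ N)} := by
    rintro _ ⟨⟨x, hx⟩, rfl⟩
    intro y hy
    simp only [Set.mem_singleton_iff] at hy
    subst hy
    have := hx a (Set.mem_singleton a)
    show (a : H ⧸ N) * φ ⟨x, hx⟩ = φ ⟨x, hx⟩ * (a : H ⧸ N)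
    simp only [φ, π, MonoidHom.comp_apply, QuotientGroup.mk'_apply, Subgroup.coe_subtype]
    rw [← QuotientGroup.mk_mul, ← QuotientGroup.mk_mul, this]
  have hrange : IsSolvable φ.range :=
    by haveI : Group.IsSolvable (Subgroup.centralizer {((a : H) : H ⧸ N)}) := hsolvC
       exact solvable_of_solvable_injective (Subgroup.inclusion_injective hle)
  have hmem : ∀ x : φ.ker, ((x : K) : H) ∈ N := by
    intro x
    have h := x.2
    simp only [MonoidHom.mem_ker, MonoidHom.comp_apply, QuotientGroup.mk'_apply,
      Subgroup.coe_subtype, QuotientGroup.eq_one_iff, φ, π] at h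
    exact h
  have hker : IsSolvable φ.ker := by
    let f : φ.ker →* N :=
      { toFun := fun x => ⟨((x : K) : H), hmem x⟩
        map_one' := rfl
        map_mul' := fun x y => rfl }
    have hf : Function.Injective f := by
      intro x y h
      have h2 : ((x : K) : H) = ((y : K) : H) := congrArg (Subtype.val : N → H) h
      ext
      exact h2
    haveI : Group.IsSolvable N := h1
    exact solvable_of_solvable_injective hf
  haveI : Group.IsSolvable φ.ker := hker
  haveI : Group.IsSolvable φ.range := hrange
  exact solvable_of_ker_le_range φ.ker.subtype φ.rangeRestrict
    (by rw [MonoidHom.ker_rangeRestrict, Subgroup.range_subtype])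

lemma aux_map {H : Type*} [Group H] (β : H ≃* H) (a : H) :
    (Subgroup.centralizer ({a} : Set H)).map β.toMonoidHom
      = Subgroup.centralizer ({β a} : Set H) := by
  ext y
  rw [Subgroup.mem_map_equiv]
  simp only [Subgroup.mem_centralizer_iff, Set.mem_singleton_iff, forall_eq]
  constructor
  · intro h
    have h2 := congrArg β h
    simpa [map_mul] using h2
  · intro h
    have h2 := congrArg β.symm h
    simpa [map_mul] using h2

/-- if `N ⊴ H` is solvable, centralizers of nontrivial elements of `H/N`
are solvable, and centralizers in `H` of elements of `N` are non-solvable, then `N` is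
a characteristic subgroup of `H`, i.e. `α(N) = N` for every automorphism `α` of `H`. -/
theorem stmt6 {H : Type*} [Group H] (N : Subgroup H) [N.Normal]
    (h1 : IsSolvable N)
    (h2 : ∀ hb : H ⧸ N, hb ≠ 1 → IsSolvable (Subgroup.centralizer {hb}))
    (h3 : ∀ a ∈ N, ¬ IsSolvable (Subgroup.centralizer ({a} : Set H))) :
    ∀ α : H ≃* H, N.map α.toMonoidHom = N := by
  have key : ∀ (β : H ≃* H) (a : H), a ∈ N → β a ∈ N := by
    intro β a haN
    by_contra hb
    apply h3 a haN
    have hsolv := aux_solv N h1 h2 hb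
    rw [← aux_map β a] at hsolv
    haveI : Group.IsSolvable ↥(Subgroup.map ((β : H →* H)) (Subgroup.centralizer ({a} : Set H))) := hsolv
    exact solvable_of_solvable_injective
      (f := (β.subgroupMap (Subgroup.centralizer ({a} : Set H))).toMonoidHom)
      (MulEquiv.injective _)
  intro α
  ext x
  rw [Subgroup.mem_map_equiv]
  constructor
  · intro h
    have := key α _ h
    simpa using this
  · intro h
    exact key α.symm x h
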